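/- arXiv:2002.11451 — 2 statements merged into one kernel-verified Lean document; each statement's English description precedes it below -/
import Mathlib

section
/- The function φ(r) = 1/cosh(√r) is completely monotone on (0,∞), with the convention φ(0) = 1 (extended continuously), and lim_{r→0⁺} φ(r) = 1. -/
open Real Filter Set Finset Topology

namespace CMaux

noncomputable def cc (k : ℕ) : ℝ := π ^ 2 * (2 * (k : ℝ) + 1) ^ 2

lemma cc_pos (k : ℕ) : 0 < cc k := by
  have : (0:ℝ) < 2 * (k:ℝ) + 1 := by positivity
  have := Real.pi_pos
  unfold cc; positivity

lemma pi_sq_le_cc (k : ℕ) : π ^ 2 ≤ cc k := by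
  unfold cc
  nlinarith [Real.pi_pos, sq_nonneg ((k:ℝ)), (Nat.cast_nonneg k : (0:ℝ) ≤ k)]

lemma summable_inv_cc : Summable (fun k : ℕ => (cc k)⁻¹) := by
  have h1 : Summable (fun k : ℕ => 1 / ((k:ℝ) + 1) ^ 2) := by
    have := (summable_nat_add_iff (f := fun n : ℕ => 1 / (n:ℝ) ^ 2) 1).mpr
      (summable_one_div_nat_pow.mpr one_lt_two)
    simpa using this
  refine Summable.of_nonneg_of_le (fun k => inv_nonneg.mpr (cc_pos k).le) (fun k => ?_) h1
  rw [one_div]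
  have hck := cc_pos k
  refine inv_anti₀ (by positivity) ?_
  show ((k:ℝ) + 1) ^ 2 ≤ cc k
  unfold cc
  have hpi : (1:ℝ) ≤ π := by nlinarith [Real.pi_gt_three]
  have h2 : ((k:ℝ) + 1) ^ 2 ≤ (2 * (k:ℝ) + 1) ^ 2 := by
    nlinarith [(Nat.cast_nonneg k : (0:ℝ) ≤ k)]
  calc ((k:ℝ) + 1) ^ 2 ≤ (2*(k:ℝ)+1)^2 := h2
    _ ≤ π ^ 2 * (2*(k:ℝ)+1)^2 := by
      have hpi2 : (1:ℝ) ≤ π ^ 2 := by nlinarith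
      nlinarith [mul_le_mul_of_nonneg_right hpi2 (sq_nonneg (2*(k:ℝ)+1))]

/-- the `j`-th term function -/
noncomputable def tj (j : ℕ) (r : ℝ) (k : ℕ) : ℝ :=
  8 * 4 ^ j * (j.factorial : ℝ) / (4 * r + cc k) ^ (j + 1)

noncomputable def Tj (j : ℕ) (r : ℝ) : ℝ := ∑' k : ℕ, tj j r k

lemma tj_nonneg (j : ℕ) {r : ℝ} (hr : 0 ≤ r) (k : ℕ) : 0 ≤ tj j r k := by
  have := cc_pos k
  unfold tj; positivity

lemma denom_pos (j : ℕ) {r : ℝ} (hr : 0 ≤ r) (k : ℕ) : 0 < (4 * r + cc k) ^ (j + 1) := by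
  have := cc_pos k; positivity

lemma tj_le (j : ℕ) {r : ℝ} (hr : 0 ≤ r) (k : ℕ) :
    tj j r k ≤ 8 * 4 ^ j * (j.factorial : ℝ) / (π ^ 2) ^ j * (cc k)⁻¹ := by
  have hck := cc_pos k
  have hpi := Real.pi_pos
  have hd : (π ^ 2) ^ j * cc k ≤ (4 * r + cc k) ^ (j + 1) := by
    have h1 : cc k ≤ 4 * r + cc k := by linarith
    calc (π ^ 2) ^ j * cc k ≤ (cc k) ^ j * cc k := by
          refine mul_le_mul_of_nonneg_right (pow_le_pow_left₀ (by positivity) (pi_sq_le_cc k) j) hck.le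
      _ = (cc k) ^ (j + 1) := by rw [pow_succ]
      _ ≤ (4 * r + cc k) ^ (j + 1) := pow_le_pow_left₀ hck.le h1 _
  have h2 : tj j r k ≤ 8 * 4 ^ j * (j.factorial : ℝ) / ((π ^ 2) ^ j * cc k) := by
    unfold tj
    exact div_le_div_of_nonneg_left (by positivity) (by positivity) hd
  refine h2.trans (le_of_eq ?_)
  have h3 := cc_pos k
  have h4 : (0:ℝ) < (π ^ 2) ^ j := by have := Real.pi_pos; positivity
  field_simp

lemma summable_tj (j : ℕ) {r : ℝ} (hr : 0 ≤ r) : Summable (tj j r) := by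
  refine Summable.of_nonneg_of_le (tj_nonneg j hr)
    (tj_le j hr) ((summable_inv_cc.mul_left _))

lemma Tj_nonneg (j : ℕ) {r : ℝ} (hr : 0 ≤ r) : 0 ≤ Tj j r :=
  tsum_nonneg (tj_nonneg j hr)

lemma hasDerivAt_tj (j k : ℕ) {r : ℝ} (hr : 0 < r) :
    HasDerivAt (fun y => tj j y k) (-(tj (j+1) r k)) r := by
  have hck := cc_pos k
  have hd : (0:ℝ) < 4 * r + cc k := by linarith
  have hb : HasDerivAt (fun y : ℝ => 4 * y + cc k) 4 r := by
    simpa using ((hasDerivAt_id r).const_mul (4:ℝ)).add_const (cc k)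
  have hpow : HasDerivAt (fun y : ℝ => (4 * y + cc k) ^ (j+1))
      ((j+1) * (4 * r + cc k) ^ j * 4) r := by
    simpa using hb.fun_pow (j+1)
  have hinv := hpow.fun_inv (by positivity)
  have := hinv.const_mul (8 * 4 ^ j * (j.factorial : ℝ))
  refine this.congr_deriv (Eq.symm ?_)
  rw [tj, Nat.factorial_succ]
  push_cast
  field_simp
  ring

lemma hasDerivAt_Tj (j : ℕ) {r : ℝ} (hr : 0 < r) :
    HasDerivAt (Tj j) (-(Tj (j+1) r)) r := by
  have key : ∀ x ∈ Ioi (0:ℝ), HasDerivAt (Tj j) (∑' k, -(tj (j+1) x k)) x := by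
    refine fun x hx => hasDerivAt_of_tendstoUniformlyOn (isOpen_Ioi)
      (f := fun n y => ∑ k ∈ Finset.range n, tj j y k)
      (f' := fun n y => ∑ k ∈ Finset.range n, -(tj (j+1) y k))
      (g := Tj j) (g' := fun y => ∑' k, -(tj (j+1) y k)) (l := atTop) ?_ ?_ ?_ hx
    · refine tendstoUniformlyOn_tsum_nat
        (u := fun k => 8 * 4 ^ (j+1) * ((j+1).factorial : ℝ) / (π ^ 2) ^ (j+1) * (cc k)⁻¹)
        (summable_inv_cc.mul_left _) (fun k y hy => ?_)
      have hy' : (0:ℝ) ≤ y := (le_of_lt hy)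
      rw [norm_neg, Real.norm_eq_abs, abs_of_nonneg (tj_nonneg _ hy' k)]
      exact tj_le (j+1) hy' k
    · filter_upwards with n y hy
      exact HasDerivAt.fun_sum (fun k _ => hasDerivAt_tj j k hy)
    · intro y hy
      exact (summable_tj j (le_of_lt hy)).hasSum.tendsto_sum_nat
  have h := key r hr
  convert h using 1
  rw [Tj, tsum_neg]

/-- sinh product from Euler's sine product at imaginary argument -/
lemma tendsto_sinh_prod (w : ℝ) (hw : w ≠ 0) :
    Tendsto (fun n : ℕ => ∏ j ∈ Finset.range n, (1 + w^2 / (π^2 * ((j:ℝ)+1)^2)))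
      atTop (𝓝 (Real.sinh w / w)) := by
  have h := Complex.tendsto_euler_sin_prod ((w : ℂ) * Complex.I / (π : ℂ))
  have hπ : ((π : ℂ)) ≠ 0 := by
    simpa using Complex.ofReal_ne_zero.mpr Real.pi_ne_zero
  have hz : (π : ℂ) * ((w : ℂ) * Complex.I / (π : ℂ)) = (w : ℂ) * Complex.I := by
    field_simp
  rw [hz] at h
  have hsin : Complex.sin ((w:ℂ) * Complex.I) = Complex.sinh (w:ℂ) * Complex.I := by
    rw [Complex.sin_mul_I]
  rw [hsin] at h
  -- rewrite the factors
  have hfact : ∀ n : ℕ, ((w:ℂ) * Complex.I) * ∏ j ∈ Finset.range n,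
      ((1 : ℂ) - ((w : ℂ) * Complex.I / (π : ℂ))^2 / ((j:ℂ)+1)^2)
      = ((w:ℂ) * Complex.I) * ∏ j ∈ Finset.range n,
        ((1 + w^2 / (π^2 * ((j:ℝ)+1)^2) : ℝ) : ℂ) := by
    intro n
    congr 1
    refine Finset.prod_congr rfl fun j _ => ?_
    have hj : ((j:ℂ)+1) ≠ 0 := by
      have : ((j:ℂ)+1) = ((j+1 : ℕ) : ℂ) := by push_cast; ring
      rw [this]
      exact Nat.cast_ne_zero.mpr (Nat.succ_ne_zero j)
    have hpi : (π:ℂ) ≠ 0 := Complex.ofReal_ne_zero.mpr Real.pi_ne_zero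
    push_cast
    rw [div_pow, mul_pow, Complex.I_sq]
    field_simp
    ring
  simp_rw [hfact] at h
  -- divide by w * I
  have hwI : ((w:ℂ) * Complex.I) ≠ 0 := by
    simp [Complex.ofReal_ne_zero.mpr hw, Complex.I_ne_zero]
  have h2 := h.const_mul (((w:ℂ) * Complex.I)⁻¹)
  have h3 : Tendsto (fun n : ℕ => ((∏ j ∈ Finset.range n,
      (1 + w^2 / (π^2 * ((j:ℝ)+1)^2)) : ℝ) : ℂ)) atTop
      (𝓝 (((Real.sinh w / w : ℝ)) : ℂ)) := by
    have hw' : (w:ℂ) ≠ 0 := Complex.ofReal_ne_zero.mpr hw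
    have : (((w:ℂ) * Complex.I)⁻¹ * (Complex.sinh w * Complex.I)) = ((Real.sinh w / w : ℝ) : ℂ) := by
      rw [← Complex.ofReal_sinh]
      push_cast
      field_simp [hw']
    rw [← this]
    refine h2.congr fun n => ?_
    rw [← mul_assoc, inv_mul_cancel₀ hwI, one_mul, Complex.ofReal_prod]
  exact Filter.tendsto_ofReal_iff.mp h3

/-- split of a product over `range (2*n)` into even and odd indices -/
lemma prod_range_two_mul (f : ℕ → ℝ) (n : ℕ) :
    ∏ j ∈ Finset.range (2*n), f j
      = (∏ k ∈ Finset.range n, f (2*k)) * ∏ k ∈ Finset.range n, f (2*k+1) := by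
  induction n with
  | zero => simp
  | succ n ih =>
    have : 2 * (n+1) = (2*n) + 1 + 1 := by ring
    rw [this, Finset.prod_range_succ, Finset.prod_range_succ, ih,
      Finset.prod_range_succ, Finset.prod_range_succ]
    ring

/-- cosh product -/
lemma tendsto_cosh_prod (w : ℝ) (hw : 0 < w) :
    Tendsto (fun n : ℕ => ∏ k ∈ Finset.range n, (1 + 4*w^2 / (π^2 * (2*(k:ℝ)+1)^2)))
      atTop (𝓝 (Real.cosh w)) := by
  have hA := tendsto_sinh_prod w hw.ne'
  have hB := (tendsto_sinh_prod (2*w) (by positivity)).comp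
    (tendsto_id.const_mul_atTop' (zero_lt_two) : Tendsto (fun n : ℕ => 2*n) atTop atTop)
  -- hB : products over range (2n) of (1 + 4w²/(π²(j+1)²)) → sinh(2w)/(2w)
  have hsinh : (0:ℝ) < Real.sinh w := Real.sinh_pos_iff.mpr hw
  have hden : Real.sinh w / w ≠ 0 := by positivity
  have hq := hB.div hA hden
  have hsplit : ∀ n : ℕ, (∏ j ∈ Finset.range (2*n), (1 + (2*w)^2 / (π^2 * ((j:ℝ)+1)^2)))
      = (∏ k ∈ Finset.range n, (1 + 4*w^2 / (π^2 * (2*(k:ℝ)+1)^2)))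
        * ∏ k ∈ Finset.range n, (1 + w^2 / (π^2 * ((k:ℝ)+1)^2)) := by
    intro n
    rw [prod_range_two_mul (fun j => (1 + (2*w)^2 / (π^2 * ((j:ℝ)+1)^2))) n]
    have hpi := Real.pi_ne_zero
    congr 1
    · refine Finset.prod_congr rfl fun k _ => ?_
      push_cast
      rw [mul_pow]
      norm_num
    · refine Finset.prod_congr rfl fun k _ => ?_
      have hk : (0:ℝ) < ((k:ℝ)+1) := by positivity
      push_cast
      congr 1
      rw [div_eq_div_iff (by positivity) (by positivity)]
      ring
  have hApos : ∀ n : ℕ, (0:ℝ) < ∏ j ∈ Finset.range n, (1 + w^2 / (π^2 * ((j:ℝ)+1)^2)) := by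
    intro n
    refine Finset.prod_pos fun j _ => by positivity
  have hlim : Real.sinh (2*w) / (2*w) / (Real.sinh w / w) = Real.cosh w := by
    rw [Real.sinh_two_mul]
    field_simp
  rw [← hlim]
  refine hq.congr fun n => ?_
  simp only [Function.comp_apply, Pi.div_apply]
  rw [hsplit n, mul_div_assoc, div_self (hApos n).ne', mul_one]

lemma tanh_eq_tsum {x : ℝ} (hx : 0 < x) :
    Real.tanh x = ∑' k : ℕ, 8 * x / (4 * x ^ 2 + cc k) := by
  have key : ∀ y ∈ Ioo (0:ℝ) (x+1), HasDerivAt (fun y => Real.log (Real.cosh y))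
      (∑' k : ℕ, 8 * y / (4 * y ^ 2 + cc k)) y := by
    refine fun y hy => hasDerivAt_of_tendstoUniformlyOn (isOpen_Ioo)
      (f := fun n z => ∑ k ∈ Finset.range n, Real.log (1 + 4 * z ^ 2 / cc k))
      (f' := fun n z => ∑ k ∈ Finset.range n, 8 * z / (4 * z ^ 2 + cc k))
      (g := fun z => Real.log (Real.cosh z))
      (g' := fun z => ∑' k : ℕ, 8 * z / (4 * z ^ 2 + cc k))
      (l := atTop) ?_ ?_ ?_ hy
    · refine tendstoUniformlyOn_tsum_nat
        (u := fun k => 8 * (x+1) * (cc k)⁻¹) (summable_inv_cc.mul_left _)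
        (fun k z hz => ?_)
      obtain ⟨hz0, hz1⟩ := hz
      have hck := cc_pos k
      rw [Real.norm_eq_abs, abs_of_nonneg (by positivity)]
      show 8 * z / (4 * z ^ 2 + cc k) ≤ 8 * (x+1) * (cc k)⁻¹
      rw [mul_comm (8*(x+1)) _, ← div_eq_inv_mul]
      exact div_le_div₀ (by positivity) (by nlinarith) hck (by nlinarith)
    · filter_upwards with n z hz
      refine HasDerivAt.fun_sum fun k _ => ?_
      have hck := cc_pos k
      have h1 : HasDerivAt (fun z : ℝ => 1 + 4 * z ^ 2 / cc k) (8 * z / cc k) z := by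
        have := (((hasDerivAt_pow 2 z).const_mul (4:ℝ)).div_const (cc k)).const_add 1
        refine this.congr_deriv (Eq.symm ?_)
        ring
      have h2 := h1.log (by positivity)
      refine h2.congr_deriv (Eq.symm ?_)
      rw [div_div, div_eq_div_iff (by positivity) (by positivity), mul_add (cc k), mul_one,
        mul_div_cancel₀ _ hck.ne']
      ring
    · intro z hz
      have hlog := (tendsto_cosh_prod z hz.1).log (Real.cosh_pos (x := z)).ne'
      refine hlog.congr fun n => ?_
      show Real.log _ = ∑ k ∈ Finset.range n, Real.log (1 + 4 * z ^ 2 / cc k)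
      rw [Real.log_prod (fun k _ => ?_)]
      · rfl
      · have hck := cc_pos k
        show (1 : ℝ) + 4 * z ^ 2 / (π ^ 2 * (2*(k:ℝ)+1)^2) ≠ 0
        have : π ^ 2 * (2*(k:ℝ)+1)^2 = cc k := rfl
        rw [this]
        positivity
  have h1 := key x ⟨hx, by linarith⟩
  have h2 : HasDerivAt (fun y => Real.log (Real.cosh y)) (Real.tanh x) x := by
    have := (Real.hasDerivAt_cosh x).log (Real.cosh_pos (x := x)).ne'
    simpa [Real.tanh_eq_sinh_div_cosh] using this
  exact (h2.unique h1)

lemma sqrt_mul_Tj0 {r : ℝ} (hr : 0 < r) :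
    Real.sqrt r * Tj 0 r = Real.tanh (Real.sqrt r) := by
  have hs : (0:ℝ) < Real.sqrt r := Real.sqrt_pos.mpr hr
  have h1 := tanh_eq_tsum hs
  rw [Real.sq_sqrt hr.le] at h1
  rw [h1, Tj]
  rw [← tsum_mul_left]
  congr 1
  funext k
  have hck := cc_pos k
  simp only [tj, pow_zero, Nat.factorial_zero, Nat.cast_one, pow_one, mul_one]
  rw [mul_div_assoc]
  ring

lemma binom_step (a b : ℕ → ℝ) (n : ℕ) :
    ∑ i ∈ Finset.range (n+1), (n.choose i : ℝ) * (a (i+1) * b (n-i) + a i * b (n-i+1))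
      = ∑ i ∈ Finset.range (n+2), ((n+1).choose i : ℝ) * (a i * b (n+1-i)) := by
  have hL : ∑ i ∈ Finset.range (n+1), (n.choose i : ℝ) * (a (i+1) * b (n-i) + a i * b (n-i+1))
      = (∑ i ∈ Finset.range (n+1), (n.choose i : ℝ) * (a (i+1) * b (n-i)))
        + ∑ i ∈ Finset.range (n+1), (n.choose i : ℝ) * (a i * b (n-i+1)) := by
    rw [← Finset.sum_add_distrib]
    exact Finset.sum_congr rfl fun i _ => by ring
  have hR : ∑ i ∈ Finset.range (n+2), ((n+1).choose i : ℝ) * (a i * b (n+1-i))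
      = (∑ i ∈ Finset.range (n+1), ((n+1).choose (i+1) : ℝ) * (a (i+1) * b (n-i)))
        + a 0 * b (n+1) := by
    rw [Finset.sum_range_succ']
    simp [Nat.succ_sub_succ]
  have hR2 : ∑ i ∈ Finset.range (n+1), ((n+1).choose (i+1) : ℝ) * (a (i+1) * b (n-i))
      = (∑ i ∈ Finset.range (n+1), (n.choose i : ℝ) * (a (i+1) * b (n-i)))
        + ∑ i ∈ Finset.range (n+1), (n.choose (i+1) : ℝ) * (a (i+1) * b (n-i)) := by
    rw [← Finset.sum_add_distrib]
    refine Finset.sum_congr rfl fun i _ => ?_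
    rw [Nat.choose_succ_succ]
    push_cast
    ring
  have h1 : ∑ i ∈ Finset.range (n+1), (n.choose i : ℝ) * (a i * b (n-i+1))
      = (∑ i ∈ Finset.range n, (n.choose (i+1) : ℝ) * (a (i+1) * b (n-i)))
        + a 0 * b (n+1) := by
    rw [Finset.sum_range_succ']
    simp only [Nat.choose_zero_right, Nat.cast_one, one_mul, Nat.sub_zero]
    congr 1
    refine Finset.sum_congr rfl fun i hi => ?_
    have hi' : i < n := Finset.mem_range.mp hi
    have : n - (i+1) + 1 = n - i := by omega
    rw [this]
  have h2 : ∑ i ∈ Finset.range (n+1), (n.choose (i+1) : ℝ) * (a (i+1) * b (n-i))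
      = ∑ i ∈ Finset.range n, (n.choose (i+1) : ℝ) * (a (i+1) * b (n-i)) := by
    rw [Finset.sum_range_succ, Nat.choose_succ_self]
    simp
  rw [hL, hR, hR2, h2, h1]
  ring

lemma leibniz {s : Set ℝ} (hs : IsOpen s) (f g : ℝ → ℝ)
    (hf : ∀ j, ∀ x ∈ s, DifferentiableAt ℝ (iteratedDeriv j f) x)
    (hg : ∀ j, ∀ x ∈ s, DifferentiableAt ℝ (iteratedDeriv j g) x) :
    ∀ n, ∀ x ∈ s, iteratedDeriv n (fun y => f y * g y) x
      = ∑ i ∈ Finset.range (n+1), (n.choose i : ℝ)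
          * (iteratedDeriv i f x * iteratedDeriv (n-i) g x) := by
  intro n
  induction n with
  | zero => intro x hx; simp
  | succ n ih =>
    intro x hx
    rw [iteratedDeriv_succ]
    have hev : iteratedDeriv n (fun y => f y * g y) =ᶠ[𝓝 x]
        fun y => ∑ i ∈ Finset.range (n+1), (n.choose i : ℝ)
          * (iteratedDeriv i f y * iteratedDeriv (n-i) g y) :=
      Filter.eventuallyEq_of_mem (hs.mem_nhds hx) (fun y hy => ih y hy)
    rw [hev.deriv_eq]
    have hterm : ∀ i ∈ Finset.range (n+1), HasDerivAt
        (fun y => (n.choose i : ℝ) * (iteratedDeriv i f y * iteratedDeriv (n-i) g y))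
        ((n.choose i : ℝ) * (iteratedDeriv (i+1) f x * iteratedDeriv (n-i) g x
          + iteratedDeriv i f x * iteratedDeriv (n-i+1) g x)) x := by
      intro i _
      have hfi : HasDerivAt (iteratedDeriv i f) (iteratedDeriv (i+1) f x) x := by
        rw [iteratedDeriv_succ]; exact (hf i x hx).hasDerivAt
      have hgi : HasDerivAt (iteratedDeriv (n-i) g) (iteratedDeriv (n-i+1) g x) x := by
        rw [iteratedDeriv_succ]; exact (hg (n-i) x hx).hasDerivAt
      exact (hfi.mul hgi).const_mul _
    have hsum : HasDerivAt (fun y => ∑ i ∈ Finset.range (n+1), (n.choose i : ℝ)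
        * (iteratedDeriv i f y * iteratedDeriv (n-i) g y))
        (∑ i ∈ Finset.range (n+1), (n.choose i : ℝ)
          * (iteratedDeriv (i+1) f x * iteratedDeriv (n-i) g x
            + iteratedDeriv i f x * iteratedDeriv (n-i+1) g x)) x :=
      HasDerivAt.fun_sum hterm
    rw [hsum.deriv]
    exact binom_step (fun i => iteratedDeriv i f x) (fun i => iteratedDeriv i g x) n

/-- the function `U = -(1/2) T` -/
noncomputable def UU : ℝ → ℝ := fun r => -(2⁻¹ : ℝ) * Tj 0 r

noncomputable def phi : ℝ → ℝ := fun r => (Real.cosh (Real.sqrt r))⁻¹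

lemma iterU : ∀ j, ∀ x ∈ Ioi (0:ℝ),
    iteratedDeriv j UU x = ((-1:ℝ))^j * (-(2⁻¹:ℝ)) * Tj j x := by
  intro j
  induction j with
  | zero => intro x hx; simp [UU, iteratedDeriv_zero]
  | succ j ih =>
    intro x hx
    rw [iteratedDeriv_succ]
    have hev : iteratedDeriv j UU =ᶠ[𝓝 x]
        fun y => ((-1:ℝ))^j * (-(2⁻¹:ℝ)) * Tj j y :=
      Filter.eventuallyEq_of_mem (isOpen_Ioi.mem_nhds hx) (fun y hy => ih y hy)
    rw [hev.deriv_eq]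
    have h := (hasDerivAt_Tj j (mem_Ioi.mp hx)).const_mul (((-1:ℝ))^j * (-(2⁻¹:ℝ)))
    rw [h.deriv]
    ring

lemma hasDerivAt_iterU (j : ℕ) {x : ℝ} (hx : x ∈ Ioi (0:ℝ)) :
    HasDerivAt (iteratedDeriv j UU)
      (((-1:ℝ))^j * (-(2⁻¹:ℝ)) * -(Tj (j+1) x)) x := by
  have hev : iteratedDeriv j UU =ᶠ[𝓝 x]
      fun y => ((-1:ℝ))^j * (-(2⁻¹:ℝ)) * Tj j y :=
    Filter.eventuallyEq_of_mem (isOpen_Ioi.mem_nhds hx) (fun y hy => iterU j y hy)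
  exact ((hasDerivAt_Tj j (mem_Ioi.mp hx)).const_mul _).congr_of_eventuallyEq hev

lemma diffU : ∀ j, ∀ x ∈ Ioi (0:ℝ), DifferentiableAt ℝ (iteratedDeriv j UU) x :=
  fun j x hx => (hasDerivAt_iterU j hx).differentiableAt

lemma smooth_iter {s : Set ℝ} (hs : IsOpen s) {f : ℝ → ℝ}
    (hf : ContDiffOn ℝ ⊤ f s) (j : ℕ) : ContDiffOn ℝ ⊤ (iteratedDeriv j f) s := by
  induction j with
  | zero => simpa [iteratedDeriv_zero] using hf
  | succ j ih =>
    rw [iteratedDeriv_succ]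
    exact ih.deriv_of_isOpen hs le_top

lemma smooth_phi : ContDiffOn ℝ ⊤ phi (Ioi 0) := by
  intro x hx
  have hx0 : x ≠ 0 := (mem_Ioi.mp hx).ne'
  have h1 : ContDiffAt ℝ ⊤ (fun r : ℝ => Real.cosh (Real.sqrt r)) x :=
    Real.contDiff_cosh.contDiffAt.comp x (Real.contDiffAt_sqrt hx0)
  have h2 : ContDiffAt ℝ ⊤ phi x :=
    h1.inv (Real.cosh_pos (x := Real.sqrt x)).ne'
  exact h2.contDiffWithinAt

lemma diffPhi : ∀ j, ∀ x ∈ Ioi (0:ℝ), DifferentiableAt ℝ (iteratedDeriv j phi) x := by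
  intro j x hx
  have := (smooth_iter isOpen_Ioi smooth_phi j) x hx
  exact (this.contDiffAt (isOpen_Ioi.mem_nhds hx)).differentiableAt (by simp)

lemma deriv_phi {y : ℝ} (hy : 0 < y) : deriv phi y = UU y * phi y := by
  have hs : (0:ℝ) < Real.sqrt y := Real.sqrt_pos.mpr hy
  have hc : HasDerivAt (fun r : ℝ => Real.cosh (Real.sqrt r))
      (Real.sinh (Real.sqrt y) * (1 / (2 * Real.sqrt y))) y :=
    (Real.hasDerivAt_cosh _).comp y (Real.hasDerivAt_sqrt hy.ne')
  have hcosh := (Real.cosh_pos (x := Real.sqrt y))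
  have hinv := hc.fun_inv hcosh.ne'
  unfold phi
  rw [hinv.deriv]
  have hU : UU y = -(2⁻¹:ℝ) * (Real.tanh (Real.sqrt y) / Real.sqrt y) := by
    rw [UU, ← sqrt_mul_Tj0 hy]
    congr 1
    exact (mul_div_cancel_left₀ (Tj 0 y) hs.ne').symm
  rw [hU, Real.tanh_eq_sinh_div_cosh]
  field_simp
  try simp

theorem main : ∀ k : ℕ, ∀ r : ℝ, 0 < r →
    0 ≤ (-1 : ℝ) ^ k * iteratedDeriv k phi r := by
  intro k
  induction k using Nat.strong_induction_on with
  | _ k ih =>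
    match k with
    | 0 =>
      intro r hr
      simp only [pow_zero, one_mul, iteratedDeriv_zero, phi]
      positivity
    | (m+1) =>
      intro r hr
      rw [iteratedDeriv_succ']
      have hev : deriv phi =ᶠ[𝓝 r] fun y => UU y * phi y :=
        Filter.eventuallyEq_of_mem (isOpen_Ioi.mem_nhds hr) (fun y hy => deriv_phi hy)
      rw [hev.iteratedDeriv_eq m]
      rw [leibniz isOpen_Ioi UU phi diffU diffPhi m r hr]
      rw [Finset.mul_sum]
      refine Finset.sum_nonneg fun i hi => ?_
      have hi' : i ≤ m := Nat.lt_succ_iff.mp (Finset.mem_range.mp hi)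
      rw [iterU i r hr]
      have h1 : 0 ≤ Tj i r := Tj_nonneg i hr.le
      have h2 : 0 ≤ (-1:ℝ)^(m-i) * iteratedDeriv (m-i) phi r :=
        ih (m-i) (by omega) r hr
      have hkey : (-1:ℝ)^(m+1) * (-1:ℝ)^i = -((-1:ℝ)^(m-i)) := by
        rw [← pow_add]
        have h : m+1+i = (m-i) + (2*i+1) := by omega
        rw [h, pow_add,
          (Odd.neg_one_pow (⟨i, by ring⟩ : Odd (2*i+1)) : ((-1:ℝ))^(2*i+1) = -1)]
        ring
      have hsgn : (-1:ℝ)^(m+1) * ((m.choose i : ℝ)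
            * (((-1:ℝ)^i * (-(2⁻¹:ℝ)) * Tj i r) * iteratedDeriv (m-i) phi r))
          = ((m.choose i : ℝ) * (2⁻¹:ℝ) * Tj i r)
            * ((-1:ℝ)^(m-i) * iteratedDeriv (m-i) phi r) := by
        linear_combination ((m.choose i : ℝ) * (-(2⁻¹:ℝ)) * Tj i r
          * iteratedDeriv (m-i) phi r) * hkey
      rw [hsgn]
      have hc0 : (0:ℝ) ≤ (m.choose i : ℝ) * (2⁻¹:ℝ) * Tj i r := by positivity
      exact mul_nonneg hc0 h2

end CMaux

/-- `φ(r) = 1/cosh(√r)` is completely monotone on `(0,∞)` and tends to `1`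
as `r → 0⁺` (and `φ(0) = 1`). -/
theorem cosh_sqrt_inv_completely_monotone :
    (∀ k : ℕ, ∀ r : ℝ, 0 < r →
      0 ≤ (-1 : ℝ) ^ k *
        iteratedDeriv k (fun r => (Real.cosh (Real.sqrt r))⁻¹) r) ∧
    (Real.cosh (Real.sqrt 0))⁻¹ = 1 ∧
    Filter.Tendsto (fun r => (Real.cosh (Real.sqrt r))⁻¹)
      (nhdsWithin 0 (Set.Ioi 0)) (nhds 1) := by
  refine ⟨fun k r hr => CMaux.main k r hr, by simp, ?_⟩
  have h1 : ContinuousAt (fun r : ℝ => Real.cosh (Real.sqrt r)) 0 :=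
    (Real.continuous_cosh.comp Real.continuous_sqrt).continuousAt
  have hcont : ContinuousAt (fun r : ℝ => (Real.cosh (Real.sqrt r))⁻¹) 0 :=
    h1.inv₀ (by simp)
  have h2 := hcont.tendsto
  have hval : ((Real.cosh (Real.sqrt 0))⁻¹ : ℝ) = 1 := by simp
  rw [hval] at h2
  exact h2.mono_left nhdsWithin_le_nhds
end

section
/- The function φ(r) = (1 + √(3r)/ρ) e^{-√(3r)/ρ} (the Matern-3/2 profile) satisfies lim_{r→0⁺} φ(r) = 1 and is completely monotone on (0,∞). -/
open Real

namespace Matern32Aux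

/-- one summand: `a * x^(-n/2) * exp (-(c * √x))`. -/
noncomputable def term (c : ℝ) (p : ℝ × ℕ) (x : ℝ) : ℝ :=
  p.1 * x ^ (-(p.2 : ℝ) / 2) * Real.exp (-(c * Real.sqrt x))

noncomputable def evalL (c : ℝ) (L : List (ℝ × ℕ)) (x : ℝ) : ℝ :=
  (L.map fun p => term c p x).sum

noncomputable def stepL (c : ℝ) (L : List (ℝ × ℕ)) : List (ℝ × ℕ) :=
  L.flatMap fun p => [(p.1 * p.2 / 2, p.2 + 2), (p.1 * c / 2, p.2 + 1)]

@[simp] lemma evalL_nil (c : ℝ) (x : ℝ) : evalL c [] x = 0 := rfl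

@[simp] lemma evalL_cons (c : ℝ) (p : ℝ × ℕ) (L : List (ℝ × ℕ)) (x : ℝ) :
    evalL c (p :: L) x = term c p x + evalL c L x := rfl

@[simp] lemma evalL_append (c : ℝ) (L M : List (ℝ × ℕ)) (x : ℝ) :
    evalL c (L ++ M) x = evalL c L x + evalL c M x := by
  simp [evalL]

lemma hasDerivAt_exp_sqrt (c : ℝ) {x : ℝ} (hx : 0 < x) :
    HasDerivAt (fun y => Real.exp (-(c * Real.sqrt y)))
      (Real.exp (-(c * Real.sqrt x)) * -(c * (1 / (2 * Real.sqrt x)))) x :=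
  (((Real.hasDerivAt_sqrt hx.ne').const_mul c).neg).exp

lemma hasDerivAt_term (c : ℝ) (p : ℝ × ℕ) {x : ℝ} (hx : 0 < x) :
    HasDerivAt (fun y => term c p y)
      (-(term c (p.1 * p.2 / 2, p.2 + 2) x + term c (p.1 * c / 2, p.2 + 1) x)) x := by
  have hr : HasDerivAt (fun y : ℝ => y ^ (-(p.2 : ℝ) / 2))
      ((-(p.2 : ℝ) / 2) * x ^ (-(p.2 : ℝ) / 2 - 1)) x :=
    Real.hasDerivAt_rpow_const (Or.inl hx.ne')
  have h := ((hr.const_mul p.1).fun_mul (hasDerivAt_exp_sqrt c hx))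
  refine h.congr_deriv ?_
  have hs : Real.sqrt x ≠ 0 := (Real.sqrt_pos.mpr hx).ne'
  have h1 : x ^ (-(((p.2 : ℕ) + 2 : ℕ) : ℝ) / 2) = x ^ (-(p.2 : ℝ) / 2 - 1) := by
    congr 1; push_cast; ring
  have h2 : x ^ (-(((p.2 : ℕ) + 1 : ℕ) : ℝ) / 2)
      = x ^ (-(p.2 : ℝ) / 2) * (Real.sqrt x)⁻¹ := by
    rw [Real.sqrt_eq_rpow, ← Real.rpow_neg hx.le, ← Real.rpow_add hx]
    congr 1; push_cast; ring
  simp only [term, h1, h2]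
  field_simp
  ring

lemma hasDerivAt_evalL (c : ℝ) (L : List (ℝ × ℕ)) {x : ℝ} (hx : 0 < x) :
    HasDerivAt (fun y => evalL c L y) (-(evalL c (stepL c L) x)) x := by
  induction L with
  | nil => simpa [stepL] using (hasDerivAt_const x (0:ℝ))
  | cons p L ih =>
    have h := (hasDerivAt_term c p hx).fun_add ih
    have hst : stepL c (p :: L)
        = (p.1 * p.2 / 2, p.2 + 2) :: (p.1 * c / 2, p.2 + 1) :: stepL c L := rfl
    simp only [evalL_cons, hst]
    refine h.congr_deriv ?_
    ring

lemma stepL_coeff_nonneg {c : ℝ} (hc : 0 ≤ c) {L : List (ℝ × ℕ)}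
    (h : ∀ p ∈ L, 0 ≤ p.1) : ∀ p ∈ stepL c L, 0 ≤ p.1 := by
  intro p hp
  simp only [stepL, List.mem_flatMap, List.mem_cons, List.mem_singleton] at hp
  obtain ⟨q, hq, hpq⟩ := hp
  have hq1 := h q hq
  rcases hpq with rfl | rfl | h'
  · positivity
  · positivity
  · exact absurd h' List.not_mem_nil

lemma evalL_nonneg {c : ℝ} {L : List (ℝ × ℕ)} (h : ∀ p ∈ L, 0 ≤ p.1)
    {x : ℝ} (hx : 0 < x) : 0 ≤ evalL c L x := by
  apply List.sum_nonneg
  intro a ha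
  simp only [List.mem_map] at ha
  obtain ⟨p, hp, rfl⟩ := ha
  have := h p hp
  have := Real.rpow_pos_of_pos hx (-(p.2 : ℝ) / 2)
  have := Real.exp_pos (-(c * Real.sqrt x))
  unfold term
  positivity

lemma iter_coeff_nonneg {c : ℝ} (hc : 0 ≤ c) (k : ℕ) :
    ∀ p ∈ (stepL c)^[k] [((1:ℝ), (0:ℕ))], 0 ≤ p.1 := by
  induction k with
  | zero => intro p hp; simp at hp; simp [hp]
  | succ k ih =>
    rw [Function.iterate_succ_apply']
    exact stepL_coeff_nonneg hc ih

end Matern32Aux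
section Main

open Real Matern32Aux

lemma matern_deriv1 {c x : ℝ} (hx : 0 < x) :
    HasDerivAt (fun y => (1 + c * Real.sqrt y) * Real.exp (-(c * Real.sqrt y)))
      (-(c ^ 2 / 2) * Real.exp (-(c * Real.sqrt x))) x := by
  have h1 : HasDerivAt (fun y : ℝ => 1 + c * Real.sqrt y) (c * (1 / (2 * Real.sqrt x))) x :=
    ((Real.hasDerivAt_sqrt hx.ne').const_mul c).const_add 1
  have h := h1.fun_mul (hasDerivAt_exp_sqrt c hx)
  refine h.congr_deriv ?_
  have hs : Real.sqrt x ≠ 0 := (Real.sqrt_pos.mpr hx).ne'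
  field_simp
  ring

/-- The Matern-3/2 profile. -/
theorem matern32_profile_completely_monotone (ρ : ℝ) (hρ : 0 < ρ) :
    Filter.Tendsto
      (fun r => (1 + Real.sqrt (3 * r) / ρ) * Real.exp (-Real.sqrt (3 * r) / ρ))
      (nhdsWithin 0 (Set.Ioi 0)) (nhds 1) ∧
    (∀ k : ℕ, ∀ r : ℝ, 0 < r →
      0 ≤ (-1 : ℝ) ^ k *
        iteratedDeriv k
          (fun r => (1 + Real.sqrt (3 * r) / ρ) * Real.exp (-Real.sqrt (3 * r) / ρ))
          r) := by
  set c : ℝ := Real.sqrt 3 / ρ with hc_def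
  have hc : 0 < c := div_pos (Real.sqrt_pos.mpr (by norm_num)) hρ
  have hf : (fun r => (1 + Real.sqrt (3 * r) / ρ) * Real.exp (-Real.sqrt (3 * r) / ρ))
      = fun y => (1 + c * Real.sqrt y) * Real.exp (-(c * Real.sqrt y)) := by
    funext y
    rw [Real.sqrt_mul (by norm_num : (0:ℝ) ≤ 3) y]
    rw [hc_def]
    ring_nf
  rw [hf]
  constructor
  · have hcont : ContinuousAt (fun y => (1 + c * Real.sqrt y) * Real.exp (-(c * Real.sqrt y)))
        (0 : ℝ) := by
      apply ContinuousAt.mul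
      · exact continuousAt_const.add (Real.continuous_sqrt.continuousAt.const_smul c)
      · exact Real.continuous_exp.continuousAt.comp
          (Real.continuous_sqrt.continuousAt.const_smul c).neg
    have := hcont.tendsto.mono_left (nhdsWithin_le_nhds (s := Set.Ioi (0:ℝ)))
    simpa using this
  · -- key formula for derivatives of order ≥ 1
    set F := fun y => (1 + c * Real.sqrt y) * Real.exp (-(c * Real.sqrt y)) with hF
    have key : ∀ k : ℕ, ∀ x : ℝ, 0 < x →
        iteratedDeriv (k + 1) F x
          = (-1 : ℝ) ^ (k + 1) * (c ^ 2 / 2) * evalL c ((stepL c)^[k] [((1:ℝ), (0:ℕ))]) x := by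
      intro k
      induction k with
      | zero =>
        intro x hx
        rw [iteratedDeriv_one, (matern_deriv1 hx).deriv]
        simp [evalL, term]
      | succ k ih =>
        intro x hx
        rw [iteratedDeriv_succ]
        have hev : iteratedDeriv (k + 1) F
            =ᶠ[nhds x] fun y =>
              (-1 : ℝ) ^ (k + 1) * (c ^ 2 / 2) * evalL c ((stepL c)^[k] [((1:ℝ), (0:ℕ))]) y := by
          filter_upwards [Ioi_mem_nhds hx] with y hy using ih y hy
        rw [hev.deriv_eq]
        have hd := ((hasDerivAt_evalL c ((stepL c)^[k] [((1:ℝ), (0:ℕ))]) hx).const_mul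
          ((-1 : ℝ) ^ (k + 1) * (c ^ 2 / 2))).deriv
        rw [hd, Function.iterate_succ_apply']
        ring
    intro k x hx
    cases k with
    | zero =>
      simp only [pow_zero, one_mul, iteratedDeriv_zero, hF]
      have h1 : 0 ≤ 1 + c * Real.sqrt x := by positivity
      positivity
    | succ k =>
      rw [key k x hx]
      have hnn : 0 ≤ evalL c ((stepL c)^[k] [((1:ℝ), (0:ℕ))]) x :=
        evalL_nonneg (iter_coeff_nonneg hc.le k) hx
      have hsq : (-1 : ℝ) ^ (k + 1) * ((-1 : ℝ) ^ (k + 1)) = 1 := by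
        rw [← pow_add]
        exact Even.neg_one_pow ⟨k + 1, by ring⟩
      calc (0:ℝ) ≤ c ^ 2 / 2 * evalL c ((stepL c)^[k] [((1:ℝ), (0:ℕ))]) x := by positivity
        _ = (-1 : ℝ) ^ (k + 1) * ((-1 : ℝ) ^ (k + 1) * (c ^ 2 / 2)
              * evalL c ((stepL c)^[k] [((1:ℝ), (0:ℕ))]) x) := by
            rw [← mul_assoc, ← mul_assoc, hsq, one_mul]

end Main
end
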